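/- Let a, b > 0. Suppose ξ, η : ℝ × ℝ → ℝ are real-analytic functions satisfying all four determining equations: (i) -bxη + b(η_x - ξ_t)x² - bx²(η_x - 2ξ_t) + 2η_t x² + (2η_tx - ξ_tt)x³ - 3ξ_x(t³ - a²t - x)x = 0; (ii) 2bξ_x x² - ηx + 2(η_x - ξ_t)x² + (η_xx - 2ξ_tx)x³ - (η_x - 2ξ_t)x² = 0; (iii) -2ξ_x x² - ξ_xx x³ + 3ξ_x x² = 0; (iv) ξ(a² - 3t²)x + 2η(t³ - a²t - x) + ηx + η_tt x³ + (η_x - 2ξ_t)(t³ - a²t - x)x + bη_t x² = 0, for all (t,x) ∈ ℝ². Then ξ ≡ 0 and η ≡ 0. -/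

import Mathlib

noncomputable def px (f : ℝ × ℝ → ℝ) : ℝ × ℝ → ℝ := fun p => fderiv ℝ f p (0, 1)
noncomputable def pt (f : ℝ × ℝ → ℝ) : ℝ × ℝ → ℝ := fun p => fderiv ℝ f p (1, 0)

theorem px_analytic {f : ℝ × ℝ → ℝ} (hf : ∀ p, AnalyticAt ℝ f p) :
    ∀ p, AnalyticAt ℝ (px f) p := by
  intro p
  have h1 : AnalyticAt ℝ (fderiv ℝ f) p := (hf p).fderiv
  have h2 := (ContinuousLinearMap.apply ℝ ℝ ((0:ℝ), (1:ℝ))).analyticAt (fderiv ℝ f p)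
  exact h2.comp h1

theorem pt_analytic {f : ℝ × ℝ → ℝ} (hf : ∀ p, AnalyticAt ℝ f p) :
    ∀ p, AnalyticAt ℝ (pt f) p := by
  intro p
  have h1 : AnalyticAt ℝ (fderiv ℝ f) p := (hf p).fderiv
  have h2 := (ContinuousLinearMap.apply ℝ ℝ ((1:ℝ), (0:ℝ))).analyticAt (fderiv ℝ f p)
  exact h2.comp h1

theorem hasDerivAt_slice_x {f : ℝ × ℝ → ℝ} (hf : ∀ p, AnalyticAt ℝ f p) (t x : ℝ) :
    HasDerivAt (fun y => f (t, y)) (px f (t, x)) x := by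
  have hι : HasDerivAt (fun y : ℝ => ((t, y) : ℝ × ℝ)) ((0 : ℝ), (1 : ℝ)) x :=
    (hasDerivAt_const x t).prodMk (hasDerivAt_id x)
  exact (hf (t, x)).differentiableAt.hasFDerivAt.comp_hasDerivAt x hι

theorem hasDerivAt_slice_t {f : ℝ × ℝ → ℝ} (hf : ∀ p, AnalyticAt ℝ f p) (t x : ℝ) :
    HasDerivAt (fun s => f (s, x)) (pt f (t, x)) t := by
  have hι : HasDerivAt (fun s : ℝ => ((s, x) : ℝ × ℝ)) ((1 : ℝ), (0 : ℝ)) t :=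
    (hasDerivAt_id t).prodMk (hasDerivAt_const t x)
  exact (hf (t, x)).differentiableAt.hasFDerivAt.comp_hasDerivAt t hι

theorem deriv_slice_x {f : ℝ × ℝ → ℝ} (hf : ∀ p, AnalyticAt ℝ f p) (t x : ℝ) :
    deriv (fun y => f (t, y)) x = px f (t, x) := (hasDerivAt_slice_x hf t x).deriv

theorem deriv_slice_t {f : ℝ × ℝ → ℝ} (hf : ∀ p, AnalyticAt ℝ f p) (t x : ℝ) :
    deriv (fun s => f (s, x)) t = pt f (t, x) := (hasDerivAt_slice_t hf t x).deriv

theorem slice_x_analytic {f : ℝ × ℝ → ℝ} (hf : ∀ p, AnalyticAt ℝ f p) (t : ℝ) :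
    ∀ y : ℝ, AnalyticAt ℝ (fun y => f (t, y)) y := by
  intro y
  exact AnalyticAt.comp (g := f) (f := fun y : ℝ => ((t, y) : ℝ × ℝ)) (hf (t, y))
    ((analyticAt_const (v := t)).prod analyticAt_id)

theorem slice_t_analytic {f : ℝ × ℝ → ℝ} (hf : ∀ p, AnalyticAt ℝ f p) (x : ℝ) :
    ∀ s : ℝ, AnalyticAt ℝ (fun s => f (s, x)) s := by
  intro s
  exact AnalyticAt.comp (g := f) (f := fun s : ℝ => ((s, x) : ℝ × ℝ)) (hf (s, x))
    (analyticAt_id.prod (analyticAt_const (v := x)))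

theorem cont_slice_x {f : ℝ × ℝ → ℝ} (hf : ∀ p, AnalyticAt ℝ f p) (t : ℝ) :
    Continuous (fun y => f (t, y)) :=
  continuous_iff_continuousAt.2 fun y => (slice_x_analytic hf t y).continuousAt

theorem cont_slice_t {f : ℝ × ℝ → ℝ} (hf : ∀ p, AnalyticAt ℝ f p) (x : ℝ) :
    Continuous (fun s => f (s, x)) :=
  continuous_iff_continuousAt.2 fun s => (slice_t_analytic hf x s).continuousAt

/-- extend an identity from `x ≠ 0` to all `x` by continuity -/
theorem ext_ne_zero {g h : ℝ → ℝ} (hg : Continuous g) (hh : Continuous h)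
    (he : ∀ x : ℝ, x ≠ 0 → g x = h x) : ∀ x, g x = h x := by
  have : g = h := by
    apply hg.ext_on (dense_compl_singleton (0 : ℝ)) hh
    intro x hx
    exact he x hx
  exact fun x => congrFun this x

theorem const_of_hasDerivAt_zero {g : ℝ → ℝ} (h : ∀ y, HasDerivAt g 0 y) :
    ∀ y, g y = g 0 := by
  intro y
  have := is_const_of_deriv_eq_zero (f := g) (fun y => (h y).differentiableAt)
    (fun y => (h y).deriv) y 0
  exact this

theorem deriv_zero_of_eq_zero {g d : ℝ → ℝ} (hg : ∀ y, HasDerivAt g (d y) y)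
    (h0 : ∀ y, g y = 0) : ∀ y, d y = 0 := by
  intro y
  have he : g = fun _ => (0 : ℝ) := funext h0
  have h1 := hg y
  rw [he] at h1
  exact h1.unique (hasDerivAt_const y 0)

theorem integrate_eq {g G dg : ℝ → ℝ}
    (hg : ∀ y, HasDerivAt g (dg y) y) (hG : ∀ y, HasDerivAt G (dg y) y) :
    ∀ y, g y = G y + (g 0 - G 0) := by
  intro y
  have h : ∀ y, HasDerivAt (fun y => g y - G y) 0 y := fun y => by
    exact ((hg y).sub (hG y)).congr_deriv (sub_self _)
  have h2 := const_of_hasDerivAt_zero h y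
  linarith [h2]

theorem hasDerivAt_poly3 (p q r s y : ℝ) :
    HasDerivAt (fun x => p + q * x + r * x ^ 2 / 2 + s * x ^ 3 / 6)
      (q + r * y + s * y ^ 2 / 2) y := by
  have h1 : HasDerivAt (fun x : ℝ => p + q * x + r * x ^ 2 / 2 + s * x ^ 3 / 6)
      (0 + q * 1 + r * ((2 : ℕ) * y ^ 1) / 2 + s * ((3 : ℕ) * y ^ 2) / 6) y :=
    (((hasDerivAt_const y p).add ((hasDerivAt_id y).const_mul q)).add
      (((hasDerivAt_pow 2 y).const_mul r).div_const 2)).add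
      (((hasDerivAt_pow 3 y).const_mul s).div_const 6)
  convert h1 using 1
  push_cast
  ring

set_option maxHeartbeats 4000000 in
theorem stmt_6 (a b : ℝ) (ha : 0 < a) (hb : 0 < b)
    (ξ η : ℝ × ℝ → ℝ)
    (hξa : ∀ p : ℝ × ℝ, AnalyticAt ℝ ξ p)
    (hηa : ∀ p : ℝ × ℝ, AnalyticAt ℝ η p)
    (h1 : ∀ t x : ℝ,
      -(b * x * η (t, x))
        + b * (deriv (fun y => η (t, y)) x - deriv (fun s => ξ (s, x)) t) * x ^ 2
        - b * x ^ 2 * (deriv (fun y => η (t, y)) x - 2 * deriv (fun s => ξ (s, x)) t)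
        + 2 * deriv (fun s => η (s, x)) t * x ^ 2
        + (2 * deriv (fun s => deriv (fun y => η (s, y)) x) t
            - deriv (fun s => deriv (fun r => ξ (r, x)) s) t) * x ^ 3
        - 3 * deriv (fun y => ξ (t, y)) x * (t ^ 3 - a ^ 2 * t - x) * x = 0)
    (h2 : ∀ t x : ℝ,
      2 * b * deriv (fun y => ξ (t, y)) x * x ^ 2
        - η (t, x) * x
        + 2 * (deriv (fun y => η (t, y)) x - deriv (fun s => ξ (s, x)) t) * x ^ 2
        + (deriv (deriv (fun y => η (t, y))) x
            - 2 * deriv (fun s => deriv (fun y => ξ (s, y)) x) t) * x ^ 3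
        - (deriv (fun y => η (t, y)) x - 2 * deriv (fun s => ξ (s, x)) t) * x ^ 2 = 0)
    (h3 : ∀ t x : ℝ,
      -2 * deriv (fun y => ξ (t, y)) x * x ^ 2
        - deriv (deriv (fun y => ξ (t, y))) x * x ^ 3
        + 3 * deriv (fun y => ξ (t, y)) x * x ^ 2 = 0)
    (h4 : ∀ t x : ℝ,
      ξ (t, x) * (a ^ 2 - 3 * t ^ 2) * x
        + 2 * η (t, x) * (t ^ 3 - a ^ 2 * t - x)
        + η (t, x) * x
        + deriv (fun s => deriv (fun r => η (r, x)) s) t * x ^ 3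
        + (deriv (fun y => η (t, y)) x - 2 * deriv (fun s => ξ (s, x)) t)
            * (t ^ 3 - a ^ 2 * t - x) * x
        + b * deriv (fun s => η (s, x)) t * x ^ 2 = 0) :
    (∀ t x : ℝ, ξ (t, x) = 0) ∧ (∀ t x : ℝ, η (t, x) = 0) := by
  -- analyticity of iterated partials
  have hξ1 := px_analytic hξa
  have hξ2 := px_analytic hξ1
  have hξ3 := px_analytic hξ2
  have hη1 := px_analytic hηa
  have hη2 := px_analytic hη1
  have hη3 := px_analytic hη2
  have hη4 := px_analytic hη3
  -- deriv rewrites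
  have dxξ : ∀ t x, deriv (fun y => ξ (t, y)) x = px ξ (t, x) := deriv_slice_x hξa
  have dxξf : ∀ t, deriv (fun y => ξ (t, y)) = fun y => px ξ (t, y) :=
    fun t => funext (dxξ t)
  -- Step A : structure of ξ in x
  have h3' : ∀ t x, px ξ (t, x) * x ^ 2 = px (px ξ) (t, x) * x ^ 3 := by
    intro t x
    have h := h3 t x
    simp only [dxξf t, deriv_slice_x hξ1] at h
    linarith
  have s1 : ∀ t x, px ξ (t, x) = x * px (px ξ) (t, x) := by
    intro t
    apply ext_ne_zero (cont_slice_x hξ1 t)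
      (continuous_id.mul (cont_slice_x hξ2 t))
    intro x hx
    have h := h3' t x
    have hx2 : x ^ 2 ≠ 0 := pow_ne_zero 2 hx
    have h' : px ξ (t, x) * x ^ 2 = (x * px (px ξ) (t, x)) * x ^ 2 := by
      linear_combination h
    exact mul_right_cancel₀ hx2 h'
  have s2 : ∀ t x, px (px (px ξ)) (t, x) = 0 := by
    intro t
    apply ext_ne_zero (cont_slice_x hξ3 t) continuous_const
    intro x hx
    have hfeq : (fun y => px ξ (t, y)) = fun y => y * px (px ξ) (t, y) :=
      funext (s1 t)
    have hd1 := hasDerivAt_slice_x hξ1 t x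
    rw [hfeq] at hd1
    have hd2 := (hasDerivAt_id x).mul (hasDerivAt_slice_x hξ2 t x)
    have hu := hd1.unique hd2
    have : x * px (px (px ξ)) (t, x) = 0 := by
      simp only [id_eq] at hu; linarith
    exact (mul_eq_zero.1 this).resolve_left hx
  -- the coefficient functions
  set c : ℝ → ℝ := fun t => px (px ξ) (t, 0) with hcdef
  set A : ℝ → ℝ := fun t => ξ (t, 0) with hAdef
  have K3 : ∀ t x, px (px ξ) (t, x) = c t := by
    intro t x
    have h0 : ∀ y, HasDerivAt (fun y => px (px ξ) (t, y)) 0 y := fun y => by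
      have h := hasDerivAt_slice_x hξ2 t y
      rwa [s2 t y] at h
    exact const_of_hasDerivAt_zero h0 x
  have K2 : ∀ t x, px ξ (t, x) = c t * x := by
    intro t x
    have hg : ∀ y, HasDerivAt (fun y => px ξ (t, y)) (c t + 0 * y + 0 * y ^ 2 / 2) y := by
      intro y
      have h := hasDerivAt_slice_x hξ1 t y
      rw [K3 t y] at h
      convert h using 1; ring
    have hG : ∀ y : ℝ, HasDerivAt (fun y : ℝ => (0 : ℝ) + c t * y + 0 * y ^ 2 / 2 + 0 * y ^ 3 / 6)
        (c t + 0 * y + 0 * y ^ 2 / 2) y := fun y => hasDerivAt_poly3 0 (c t) 0 0 y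
    have h := integrate_eq hg hG x
    have h00 : px ξ (t, 0) = 0 := by
      have := s1 t 0; simpa using this
    rw [h00] at h
    linarith [h]
  have K1 : ∀ t x, ξ (t, x) = A t + c t * x ^ 2 / 2 := by
    intro t x
    have hg : ∀ y, HasDerivAt (fun y => ξ (t, y)) (0 + c t * y + 0 * y ^ 2 / 2) y := by
      intro y
      have h := hasDerivAt_slice_x hξa t y
      rw [K2 t y] at h
      convert h using 1; ring
    have hG : ∀ y : ℝ, HasDerivAt (fun y : ℝ => (0 : ℝ) + 0 * y + c t * y ^ 2 / 2 + 0 * y ^ 3 / 6)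
        (0 + c t * y + 0 * y ^ 2 / 2) y := fun y => hasDerivAt_poly3 0 0 (c t) 0 y
    have h := integrate_eq hg hG x
    have : ξ (t, 0) = A t := rfl
    linarith [h]
  -- t-direction coefficient functions for ξ
  set A1 : ℝ → ℝ := fun t => pt ξ (t, 0) with hA1def
  set c1 : ℝ → ℝ := fun t => pt (px (px ξ)) (t, 0) with hc1def
  set A2 : ℝ → ℝ := fun t => pt (pt ξ) (t, 0) with hA2def
  set c2 : ℝ → ℝ := fun t => pt (pt (px (px ξ))) (t, 0) with hc2def
  have hdA : ∀ t, HasDerivAt A (A1 t) t := fun t => hasDerivAt_slice_t hξa t 0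
  have hdc : ∀ t, HasDerivAt c (c1 t) t := fun t => hasDerivAt_slice_t hξ2 t 0
  have hdA1 : ∀ t, HasDerivAt A1 (A2 t) t := fun t =>
    hasDerivAt_slice_t (pt_analytic hξa) t 0
  have hdc1 : ∀ t, HasDerivAt c1 (c2 t) t := fun t =>
    hasDerivAt_slice_t (pt_analytic hξ2) t 0
  have K4 : ∀ t x, pt ξ (t, x) = A1 t + c1 t * x ^ 2 / 2 := by
    intro t x
    have hfe : (fun s => ξ (s, x)) = fun s => A s + c s * x ^ 2 / 2 :=
      funext fun s => K1 s x
    have hd := hasDerivAt_slice_t hξa t x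
    rw [hfe] at hd
    exact hd.unique ((hdA t).add (((hdc t).mul_const (x ^ 2)).div_const 2))
  have K5 : ∀ t x, pt (px ξ) (t, x) = c1 t * x := by
    intro t x
    have hfe : (fun s => px ξ (s, x)) = fun s => c s * x := funext fun s => K2 s x
    have hd := hasDerivAt_slice_t hξ1 t x
    rw [hfe] at hd
    exact hd.unique ((hdc t).mul_const x)
  have K6 : ∀ t x, pt (pt ξ) (t, x) = A2 t + c2 t * x ^ 2 / 2 := by
    intro t x
    have hfe : (fun s => pt ξ (s, x)) = fun s => A1 s + c1 s * x ^ 2 / 2 :=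
      funext fun s => K4 s x
    have hd := hasDerivAt_slice_t (pt_analytic hξa) t x
    rw [hfe] at hd
    exact hd.unique ((hdA1 t).add (((hdc1 t).mul_const (x ^ 2)).div_const 2))
  -- Step B : structure of η in x
  have dxη : ∀ t x, deriv (fun y => η (t, y)) x = px η (t, x) := deriv_slice_x hηa
  have dxηf : ∀ t, deriv (fun y => η (t, y)) = fun y => px η (t, y) :=
    fun t => funext (dxη t)
  have dtξ : ∀ t x, deriv (fun s => ξ (s, x)) t = pt ξ (t, x) := deriv_slice_t hξa
  have dtη : ∀ t x, deriv (fun s => η (s, x)) t = pt η (t, x) := deriv_slice_t hηa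
  have hW : ∀ t x, -η (t, x) + x * px η (t, x) + x ^ 2 * px (px η) (t, x)
      + 2 * b * c t * x ^ 2 - 2 * c1 t * x ^ 3 = 0 := by
    intro t
    apply ext_ne_zero (h := fun _ => (0 : ℝ))
    · exact (((((cont_slice_x hηa t).neg.add
        (continuous_id.mul (cont_slice_x hη1 t))).add
        ((continuous_pow 2).mul (cont_slice_x hη2 t))).add
        (continuous_const.mul (continuous_pow 2))).sub
        (continuous_const.mul (continuous_pow 3)))
    · exact continuous_const
    intro x hx
    have h := h2 t x
    simp only [dxξ, dxη, dtξ, dxηf t, deriv_slice_x hη1, deriv_slice_t hξ1] at h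
    rw [K2, K4, K5] at h
    have h' : (-η (t, x) + x * px η (t, x) + x ^ 2 * px (px η) (t, x)
        + 2 * b * c t * x ^ 2 - 2 * c1 t * x ^ 3) * x = 0 := by linear_combination h
    exact (mul_eq_zero.1 h').resolve_right hx
  have E1id : ∀ t x, 3 * x * px (px η) (t, x) + x ^ 2 * px (px (px η)) (t, x)
      + 4 * b * c t * x - 6 * c1 t * x ^ 2 = 0 := by
    intro t x
    have hg : ∀ y, HasDerivAt (fun y => -η (t, y) + y * px η (t, y)
        + y ^ 2 * px (px η) (t, y) + 2 * b * c t * y ^ 2 - 2 * c1 t * y ^ 3)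
        (3 * y * px (px η) (t, y) + y ^ 2 * px (px (px η)) (t, y)
          + 4 * b * c t * y - 6 * c1 t * y ^ 2) y := by
      intro y
      have hD := ((((hasDerivAt_slice_x hηa t y).neg.add
        ((hasDerivAt_id y).mul (hasDerivAt_slice_x hη1 t y))).add
        ((hasDerivAt_pow 2 y).mul (hasDerivAt_slice_x hη2 t y))).add
        ((hasDerivAt_pow 2 y).const_mul (2 * b * c t))).sub
        ((hasDerivAt_pow 3 y).const_mul (2 * c1 t))
      refine hD.congr_deriv ?_
      push_cast
      simp only [id_eq]
      ring
    exact deriv_zero_of_eq_zero hg (fun y => hW t y) x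
  have E2id : ∀ t x, 3 * px (px η) (t, x) + x * px (px (px η)) (t, x)
      + 4 * b * c t - 6 * c1 t * x = 0 := by
    intro t
    apply ext_ne_zero (h := fun _ => (0 : ℝ))
    · exact ((((continuous_const.mul (cont_slice_x hη2 t)).add
        (continuous_id.mul (cont_slice_x hη3 t))).add
        continuous_const).sub (continuous_const.mul continuous_id))
    · exact continuous_const
    intro x hx
    have h := E1id t x
    have h' : (3 * px (px η) (t, x) + x * px (px (px η)) (t, x)
        + 4 * b * c t - 6 * c1 t * x) * x = 0 := by linear_combination h
    exact (mul_eq_zero.1 h').resolve_right hx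
  have E3id : ∀ t x, 4 * px (px (px η)) (t, x) + x * px (px (px (px η))) (t, x)
      - 6 * c1 t = 0 := by
    intro t x
    have hg : ∀ y, HasDerivAt (fun y => 3 * px (px η) (t, y)
        + y * px (px (px η)) (t, y) + 4 * b * c t - 6 * c1 t * y)
        (4 * px (px (px η)) (t, y) + y * px (px (px (px η))) (t, y) - 6 * c1 t) y := by
      intro y
      have hD := ((((hasDerivAt_slice_x hη2 t y).const_mul 3).add
        ((hasDerivAt_id y).mul (hasDerivAt_slice_x hη3 t y))).add
        (hasDerivAt_const y (4 * b * c t))).sub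
        ((hasDerivAt_id y).const_mul (6 * c1 t))
      refine hD.congr_deriv ?_
      simp only [id_eq]
      ring
    exact deriv_zero_of_eq_zero hg (fun y => E2id t y) x
  have s2η : ∀ t x, px (px (px (px η))) (t, x) = 0 := by
    intro t
    apply ext_ne_zero (cont_slice_x hη4 t) continuous_const
    intro x hx
    have hu : ∀ y, HasDerivAt (fun y => y ^ 5 * px (px (px (px η))) (t, y)) 0 y := by
      intro y
      have hD := (hasDerivAt_pow 5 y).mul (hasDerivAt_slice_x hη4 t y)
      have h0 : (5 : ℕ) * y ^ (5 - 1) * px (px (px (px η))) (t, y)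
          + y ^ 5 * px (px (px (px (px η)))) (t, y) = 0 := by
        have hE3 := E3id t y
        have hE4 : ∀ z, HasDerivAt (fun z => 4 * px (px (px η)) (t, z)
            + z * px (px (px (px η))) (t, z) - 6 * c1 t)
            (5 * px (px (px (px η))) (t, z) + z * px (px (px (px (px η)))) (t, z)) z := by
          intro z
          have hD2 := (((hasDerivAt_slice_x hη3 t z).const_mul 4).add
            ((hasDerivAt_id z).mul (hasDerivAt_slice_x hη4 t z))).sub
            (hasDerivAt_const z (6 * c1 t))
          refine hD2.congr_deriv ?_
          simp only [id_eq]
          ring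
        have h5 := deriv_zero_of_eq_zero hE4 (fun z => E3id t z) y
        push_cast
        linear_combination y ^ 4 * h5
      rwa [h0] at hD
    have h := const_of_hasDerivAt_zero hu x
    norm_num at h
    exact h.resolve_left hx
  -- integrate η in x
  set Bz : ℝ → ℝ := fun t => η (t, 0) with hBzdef
  set B : ℝ → ℝ := fun t => px η (t, 0) with hBdef
  set E : ℝ → ℝ := fun t => px (px η) (t, 0) with hEdef
  set F : ℝ → ℝ := fun t => px (px (px η)) (t, 0) with hFdef
  have N3 : ∀ t x, px (px (px η)) (t, x) = F t := by
    intro t x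
    have h0 : ∀ y, HasDerivAt (fun y => px (px (px η)) (t, y)) 0 y := fun y => by
      have h := hasDerivAt_slice_x hη3 t y
      rwa [s2η t y] at h
    exact const_of_hasDerivAt_zero h0 x
  have N2 : ∀ t x, px (px η) (t, x) = E t + F t * x := by
    intro t x
    have hg : ∀ y, HasDerivAt (fun y => px (px η) (t, y)) (F t + 0 * y + 0 * y ^ 2 / 2) y := by
      intro y
      have h := hasDerivAt_slice_x hη2 t y
      rw [N3 t y] at h
      convert h using 1; ring
    have hG : ∀ y : ℝ, HasDerivAt (fun y : ℝ => (0 : ℝ) + F t * y + 0 * y ^ 2 / 2 + 0 * y ^ 3 / 6)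
        (F t + 0 * y + 0 * y ^ 2 / 2) y := fun y => hasDerivAt_poly3 0 (F t) 0 0 y
    have h := integrate_eq hg hG x
    linarith [h]
  have N1 : ∀ t x, px η (t, x) = B t + E t * x + F t * x ^ 2 / 2 := by
    intro t x
    have hg : ∀ y, HasDerivAt (fun y => px η (t, y)) (E t + F t * y + 0 * y ^ 2 / 2) y := by
      intro y
      have h := hasDerivAt_slice_x hη1 t y
      rw [N2 t y] at h
      convert h using 1; ring
    have hG : ∀ y : ℝ, HasDerivAt (fun y : ℝ => (0 : ℝ) + E t * y + F t * y ^ 2 / 2 + 0 * y ^ 3 / 6)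
        (E t + F t * y + 0 * y ^ 2 / 2) y := fun y => hasDerivAt_poly3 0 (E t) (F t) 0 y
    have h := integrate_eq hg hG x
    linarith [h]
  have N0 : ∀ t x, η (t, x) = Bz t + B t * x + E t * x ^ 2 / 2 + F t * x ^ 3 / 6 := by
    intro t x
    have hg : ∀ y, HasDerivAt (fun y => η (t, y)) (B t + E t * y + F t * y ^ 2 / 2) y := by
      intro y
      have h := hasDerivAt_slice_x hηa t y
      rwa [N1 t y] at h
    have hG : ∀ y : ℝ, HasDerivAt (fun y : ℝ => (0 : ℝ) + B t * y + E t * y ^ 2 / 2 + F t * y ^ 3 / 6)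
        (B t + E t * y + F t * y ^ 2 / 2) y := fun y => hasDerivAt_poly3 0 (B t) (E t) (F t) y
    have h := integrate_eq hg hG x
    linarith [h]
  -- relations from W
  have hBz : ∀ t, Bz t = 0 := by
    intro t
    have h := hW t 0
    simpa using h.symm
  have RE : ∀ t, 3 * E t + 4 * b * c t = 0 := by
    intro t
    have hp := hW t 1
    have hm := hW t (-1)
    rw [N0, N1, N2] at hp hm
    have hbz := hBz t
    norm_num at hp hm
    linarith
  have RF : ∀ t, 2 * F t = 3 * c1 t := by
    intro t
    have hp := hW t 1
    have hm := hW t (-1)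
    rw [N0, N1, N2] at hp hm
    have hbz := hBz t
    norm_num at hp hm
    linarith
  -- t-derivatives of η coefficients
  set B1 : ℝ → ℝ := fun t => pt (px η) (t, 0) with hB1def
  set E1f : ℝ → ℝ := fun t => pt (px (px η)) (t, 0) with hE1fdef
  set F1f : ℝ → ℝ := fun t => pt (px (px (px η))) (t, 0) with hF1fdef
  set B2 : ℝ → ℝ := fun t => pt (pt (px η)) (t, 0) with hB2def
  have hdB : ∀ t, HasDerivAt B (B1 t) t := fun t => hasDerivAt_slice_t hη1 t 0
  have hdE : ∀ t, HasDerivAt E (E1f t) t := fun t => hasDerivAt_slice_t hη2 t 0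
  have hdF : ∀ t, HasDerivAt F (F1f t) t := fun t => hasDerivAt_slice_t hη3 t 0
  have hdB1 : ∀ t, HasDerivAt B1 (B2 t) t := fun t =>
    hasDerivAt_slice_t (pt_analytic hη1) t 0
  -- pt η (t,0) = 0
  have hptη0 : ∀ t, pt η (t, 0) = 0 := by
    intro t
    have hfe : (fun s => η (s, 0)) = fun _ => (0 : ℝ) := funext fun s => hBz s
    have hd := hasDerivAt_slice_t hηa t 0
    rw [hfe] at hd
    exact hd.unique (hasDerivAt_const t 0)
  have M4 : ∀ t x, pt η (t, x) = B1 t * x + E1f t * x ^ 2 / 2 + F1f t * x ^ 3 / 6 := by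
    intro t x
    have hfe : (fun s => η (s, x)) =
        fun s => B s * x + E s * x ^ 2 / 2 + F s * x ^ 3 / 6 := by
      funext s
      rw [N0 s x, hBz s]
      ring
    have hd := hasDerivAt_slice_t hηa t x
    rw [hfe] at hd
    exact hd.unique (((hdB t).mul_const x).add
      (((hdE t).mul_const (x ^ 2)).div_const 2) |>.add
      (((hdF t).mul_const (x ^ 3)).div_const 6))
  have M5 : ∀ t x, pt (px η) (t, x) = B1 t + E1f t * x + F1f t * x ^ 2 / 2 := by
    intro t x
    have hfe : (fun s => px η (s, x)) = fun s => B s + E s * x + F s * x ^ 2 / 2 :=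
      funext fun s => N1 s x
    have hd := hasDerivAt_slice_t hη1 t x
    rw [hfe] at hd
    exact hd.unique (((hdB t).add ((hdE t).mul_const x)).add
      (((hdF t).mul_const (x ^ 2)).div_const 2))
  have RE' : ∀ t, 3 * E1f t + 4 * b * c1 t = 0 := by
    have hg : ∀ t, HasDerivAt (fun t => 3 * E t + 4 * b * c t)
        (3 * E1f t + 4 * b * c1 t) t := fun t =>
      ((hdE t).const_mul 3).add ((hdc t).const_mul (4 * b))
    exact deriv_zero_of_eq_zero hg RE
  -- Step C : equation (i) forces c' = 0
  have hP1 : ∀ t x,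
      (-(b * B t) + b * A1 t + 3 * t * a ^ 2 * c t - 3 * t ^ 3 * c t) * x ^ 2
      + (3 * c t + 4 * B1 t - A2 t - b * E t / 2) * x ^ 3
      + (3 * E1f t - b * F t / 6 + b * c1 t / 2) * x ^ 4
      + (4 / 3 * F1f t - c2 t / 2) * x ^ 5 = 0 := by
    intro t x
    have h := h1 t x
    simp only [dxη, dtξ, dxξ, dtη, deriv_slice_t hη1,
      deriv_slice_t (pt_analytic hξa)] at h
    rw [N0, N1, K2, K4, K6, M4, M5, hBz t] at h
    linear_combination h
  have hc1z : ∀ t, c1 t = 0 := by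
    intro t
    have e1 := hP1 t 1
    have e2 := hP1 t (-1)
    have e3 := hP1 t 2
    have e4 := hP1 t (-2)
    norm_num at e1 e2 e3 e4
    have hre := RE' t
    have hrf := RF t
    have hrf' : 2 * (b * F t) = 3 * (b * c1 t) := by linear_combination b * hrf
    have hbc : b * c1 t = 0 := by linarith
    rcases mul_eq_zero.1 hbc with h | h
    · exact absurd h (ne_of_gt hb)
    · exact h
  have hcc : ∀ t, c t = c 0 := by
    apply const_of_hasDerivAt_zero
    intro t
    have h := hdc t
    rwa [hc1z t] at h
  have hFz : ∀ t, F t = 0 := fun t => by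
    have h := RF t; rw [hc1z t] at h; linarith
  have hE1fz : ∀ t, E1f t = 0 := fun t => by
    have h := RE' t; rw [hc1z t] at h; linarith
  have hF1fz : ∀ t, F1f t = 0 := deriv_zero_of_eq_zero hdF hFz
  have M6 : ∀ t x, pt (pt η) (t, x) = B2 t * x := by
    intro t x
    have hfe : (fun s => pt η (s, x)) = fun s => B1 s * x := by
      funext s
      rw [M4 s x, hE1fz s, hF1fz s]
      ring
    have hd := hasDerivAt_slice_t (pt_analytic hηa) t x
    rw [hfe] at hd
    exact hd.unique ((hdB1 t).mul_const x)
  -- Step D : equation (iv)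
  have hP4 : ∀ t x,
      (a ^ 2 * A t - 3 * t * a ^ 2 * B t + 2 * t * a ^ 2 * A1 t
        - 3 * t ^ 2 * A t + 3 * t ^ 3 * B t - 2 * t ^ 3 * A1 t) * x
      + (-2 * B t + 2 * A1 t - 2 * t * a ^ 2 * E t + 2 * t ^ 3 * E t) * x ^ 2
      + (-(3 / 2) * E t + b * B1 t + 1 / 2 * a ^ 2 * c t - 3 / 2 * t ^ 2 * c t) * x ^ 3
      + B2 t * x ^ 4 = 0 := by
    intro t x
    have h := h4 t x
    simp only [dxη, dtξ, dtη, deriv_slice_t (pt_analytic hηa)] at h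
    rw [N0, N1, K1, K4, M4, M6, hBz t, hFz t, hc1z t, hE1fz t, hF1fz t] at h
    linear_combination h
  have hB2z : ∀ t, B2 t = 0 := by
    intro t
    have e1 := hP4 t 1
    have e2 := hP4 t (-1)
    have e3 := hP4 t 2
    have e4 := hP4 t (-2)
    norm_num at e1 e2 e3 e4
    linarith
  have hm3 : ∀ t, -(3 / 2) * E t + b * B1 t + 1 / 2 * a ^ 2 * c t
      - 3 / 2 * t ^ 2 * c t = 0 := by
    intro t
    have e1 := hP4 t 1
    have e2 := hP4 t (-1)
    have e3 := hP4 t 2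
    have e4 := hP4 t (-2)
    norm_num at e1 e2 e3 e4
    linarith
  have hm2 : ∀ t, -2 * B t + 2 * A1 t - 2 * t * a ^ 2 * E t + 2 * t ^ 3 * E t = 0 := by
    intro t
    have e1 := hP4 t 1
    have e2 := hP4 t (-1)
    have e3 := hP4 t 2
    have e4 := hP4 t (-2)
    norm_num at e1 e2 e3 e4
    linarith
  have hm1 : ∀ t, a ^ 2 * A t - 3 * t * a ^ 2 * B t + 2 * t * a ^ 2 * A1 t
      - 3 * t ^ 2 * A t + 3 * t ^ 3 * B t - 2 * t ^ 3 * A1 t = 0 := by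
    intro t
    have e1 := hP4 t 1
    have e2 := hP4 t (-1)
    have e3 := hP4 t 2
    have e4 := hP4 t (-2)
    norm_num at e1 e2 e3 e4
    linarith
  have hB1c : ∀ t, B1 t = B1 0 := by
    apply const_of_hasDerivAt_zero
    intro t
    have h := hdB1 t
    rwa [hB2z t] at h
  have hc0 : c 0 = 0 := by
    have h30 := hm3 0
    have h31 := hm3 1
    have hre0 := RE 0
    have hre1 := RE 1
    rw [hcc 1] at h31 hre1
    rw [hB1c 1] at h31
    norm_num at h30 h31
    linarith
  have hcz : ∀ t, c t = 0 := fun t => by rw [hcc t, hc0]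
  have hEz : ∀ t, E t = 0 := fun t => by
    have h := RE t; rw [hcz t] at h; linarith
  have hB10 : B1 0 = 0 := by
    have h30 := hm3 0
    rw [hEz 0, hc0] at h30
    norm_num at h30
    exact h30.resolve_left (ne_of_gt hb)
  have hB1z : ∀ t, B1 t = 0 := fun t => by rw [hB1c t, hB10]
  have hBc : ∀ t, B t = B 0 := by
    apply const_of_hasDerivAt_zero
    intro t
    have h := hdB t
    rwa [hB1z t] at h
  have hA1B : ∀ t, A1 t = B 0 := by
    intro t
    have h := hm2 t
    rw [hEz t, hBc t] at h
    linarith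
  have hAaff : ∀ t, A t = A 0 + B 0 * t := by
    have hg : ∀ t, HasDerivAt A (B 0) t := fun t => by
      have h := hdA t
      rwa [hA1B t] at h
    have hG : ∀ t : ℝ, HasDerivAt (fun t : ℝ => B 0 * t) (B 0) t := fun t => by
      simpa using (hasDerivAt_id t).const_mul (B 0)
    intro t
    have h := integrate_eq hg hG t
    linarith
  have hA0 : A 0 = 0 := by
    have h := hm1 0
    norm_num at h
    exact h.resolve_left (ne_of_gt ha)
  have hB0 : B 0 = 0 := by
    have h := hm1 1
    rw [hBc 1, hA1B 1, hAaff 1, hA0] at h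
    norm_num at h
    linarith
  constructor
  · intro t x
    rw [K1 t x, hAaff t, hA0, hB0, hcz t]
    ring
  · intro t x
    rw [N0 t x, hBz t, hBc t, hB0, hEz t, hFz t]
    ring
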